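/- Every finite subgroup Σ of a group H that is icc relative to H (in particular, every finite subgroup of an icc group) is highly core-free in H, provided H is infinite. -/
import Mathlib

open scoped Pointwise

/-- The set ΣF = {σf : σ ∈ Σ, f ∈ F}. -/
def cosetProd {H : Type*} [Group H] (A : Subgroup H) (F : Set H) : Set H :=
  {h | ∃ σ ∈ A, ∃ f ∈ F, h = σ * f}

/-- A subgroup `A ≤ H` is highly core-free if for every finite `F ⊆ H`, every `n ≥ 1`
and all nonempty `S₁, …, Sₙ ⊆ H` covering `H \ ΣF`, some `Sₖ` has trivial core
`⋂_{h ∈ Sₖ} h⁻¹ A h = {1}`. -/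
def HighlyCoreFree {H : Type*} [Group H] (A : Subgroup H) : Prop :=
  ∀ F : Set H, F.Finite → ∀ n : ℕ, 1 ≤ n → ∀ S : Fin n → Set H,
    (∀ k, (S k).Nonempty) → (∀ h : H, h ∉ cosetProd A F → ∃ k, h ∈ S k) →
    ∃ k, ∀ x : H, (∀ h ∈ S k, h * x * h⁻¹ ∈ A) → x = 1

/-- If the centralizer of `x` has finite index, the conjugacy class of `x` is finite. -/
lemma conjClass_finite_of_finiteIndex {H : Type*} [Group H] (x : H)
    (hfi : (Subgroup.centralizer {x}).FiniteIndex) :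
    Set.Finite {g : H | ∃ t : H, g = t * x * t⁻¹} := by
  haveI := hfi
  let f : H ⧸ Subgroup.centralizer {x} → H := fun q =>
    Quotient.liftOn' q (fun t => t * x * t⁻¹) (by
      intro a b hab
      have h1 : a⁻¹ * b ∈ Subgroup.centralizer {x} :=
        (QuotientGroup.leftRel_apply).mp hab
      have h2 : x * (a⁻¹ * b) = (a⁻¹ * b) * x :=
        (Subgroup.mem_centralizer_iff.mp h1) x rfl
      have : a * (x * (a⁻¹ * b)) * b⁻¹ = a * ((a⁻¹ * b) * x) * b⁻¹ := by rw [h2]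
      calc a * x * a⁻¹ = a * (x * (a⁻¹ * b)) * b⁻¹ := by group
        _ = a * ((a⁻¹ * b) * x) * b⁻¹ := this
        _ = b * x * b⁻¹ := by group)
  have hsub : {g : H | ∃ t : H, g = t * x * t⁻¹} ⊆ Set.range f := by
    rintro g ⟨t, rfl⟩
    exact ⟨QuotientGroup.mk t, rfl⟩
  exact (Set.finite_range f).subset hsub

/-- A finite subgroup which is icc relative to the (infinite) ambient group is
highly core-free. -/
theorem finite_relatively_icc_hcf {H : Type*} [Group H] [Infinite H] (A : Subgroup H)
    (hfin : (A : Set H).Finite)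
    (hicc : ∀ σ : H, σ ∈ A → σ ≠ 1 → Set.Infinite {g : H | ∃ t : H, g = t * σ * t⁻¹}) :
    HighlyCoreFree A := by
  classical
  intro F hF n hn S hne hcov
  by_contra hcon
  push_neg at hcon
  choose x hx hx1 using hcon
  have hPF : (cosetProd A F).Finite := by
    have hsub : cosetProd A F ⊆ Set.image2 (· * ·) (A : Set H) F := by
      rintro h ⟨σ, hσ, f, hf, rfl⟩
      exact Set.mem_image2_of_mem hσ hf
    exact (hfin.image2 _ hF).subset hsub
  set C : Fin n → Subgroup H := fun k => Subgroup.centralizer {x k} with hC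
  let g : Fin n → H → H := fun k a =>
    if hh : ∃ h', h' * x k * h'⁻¹ = a then hh.choose else 1
  let Sub : (H ⊕ (Fin n × H)) → Subgroup H := fun i => match i with
    | Sum.inl _ => ⊥
    | Sum.inr (k, _) => C k
  let gg : (H ⊕ (Fin n × H)) → H := fun i => match i with
    | Sum.inl f => f
    | Sum.inr (k, a) => g k a
  let s : Finset (H ⊕ (Fin n × H)) :=
    hPF.toFinset.map ⟨Sum.inl, Sum.inl_injective⟩ ∪
      (Finset.univ ×ˢ hfin.toFinset).map ⟨Sum.inr, Sum.inr_injective⟩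
  have hcovers : ⋃ i ∈ s, gg i • (Sub i : Set H) = Set.univ := by
    ext h
    simp only [Set.mem_univ, iff_true, Set.mem_iUnion]
    by_cases hmem : h ∈ cosetProd A F
    · refine ⟨Sum.inl h, ?_, ?_⟩
      · apply Finset.mem_union_left
        simp [hPF.mem_toFinset, hmem]
      · show h ∈ h • ((⊥ : Subgroup H) : Set H)
        exact ⟨1, by simp⟩
    · obtain ⟨k, hk⟩ := hcov h hmem
      have ha : h * x k * h⁻¹ ∈ A := hx k h hk
      refine ⟨Sum.inr (k, h * x k * h⁻¹), ?_, ?_⟩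
      · apply Finset.mem_union_right
        simp [hfin.mem_toFinset, ha]
      · show h ∈ g k (h * x k * h⁻¹) • ((C k : Subgroup H) : Set H)
        have hex : ∃ h', h' * x k * h'⁻¹ = h * x k * h⁻¹ := ⟨h, rfl⟩
        have hg : g k (h * x k * h⁻¹) = hex.choose := by
          simp only [g, dif_pos hex]
        have hspec : hex.choose * x k * (hex.choose)⁻¹ = h * x k * h⁻¹ :=
          hex.choose_spec
        rw [hg, Set.mem_smul_set_iff_inv_smul_mem, smul_eq_mul]
        show hex.choose⁻¹ * h ∈ Subgroup.centralizer {x k}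
        rw [Subgroup.mem_centralizer_iff]
        intro y hy
        rw [Set.mem_singleton_iff] at hy
        subst hy
        set g0 := hex.choose
        have key : g0⁻¹ * (g0 * x k * g0⁻¹) * h = g0⁻¹ * (h * x k * h⁻¹) * h := by
          rw [hspec]
        calc x k * (g0⁻¹ * h) = g0⁻¹ * (g0 * x k * g0⁻¹) * h := by group
          _ = g0⁻¹ * (h * x k * h⁻¹) * h := key
          _ = (g0⁻¹ * h) * x k := by group
  obtain ⟨i, his, hfi⟩ := Subgroup.exists_finiteIndex_of_leftCoset_cover hcovers
  match i with
  | Sum.inl f =>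
      have : (⊥ : Subgroup H).index = 0 := by
        rw [Subgroup.index_bot]
        exact Nat.card_eq_zero_of_infinite
      exact hfi.index_ne_zero this
  | Sum.inr (k, a) =>
      have hfi' : (Subgroup.centralizer {x k}).FiniteIndex := hfi
      obtain ⟨h₀, h₀S⟩ := hne k
      have hσA : h₀ * x k * h₀⁻¹ ∈ A := hx k h₀ h₀S
      have hσ1 : h₀ * x k * h₀⁻¹ ≠ 1 := by
        intro h1
        apply hx1 k
        have := congrArg (fun z => h₀⁻¹ * z * h₀) h1
        simpa using by
          calc x k = h₀⁻¹ * (h₀ * x k * h₀⁻¹) * h₀ := by group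
            _ = h₀⁻¹ * 1 * h₀ := by rw [h1]
            _ = 1 := by group
      have hinf := hicc _ hσA hσ1
      apply hinf
      have hfin' := conjClass_finite_of_finiteIndex (x k) hfi'
      apply hfin'.subset
      rintro gG ⟨t, rfl⟩
      exact ⟨t * h₀, by group⟩
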